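/- Let $k$ be an algebraically closed field, $m \geq 1$, $1 \leq r' \leq r$, and $k_m = k[\epsilon]/(\epsilon^m)$. Let $N \subset k_m^{\oplus r}$ be a free $k_m$-submodule of rank $r'$. Then there exists $u \in \mathrm{GL}_r(k_m)$ with $u \equiv \mathrm{Id} \pmod{\epsilon}$ and a $k$-vector subspace $V \subset k^{\oplus r}$ such that $N = u \cdot (V \otimes_k k_m)$. -/

import Mathlib

open Polynomial

noncomputable section

variable (k : Type*) [Field k]

/-- The truncated polynomial ring `k_m = k[ε]/(ε^m)`. -/
def km (m : ℕ) : Type _ := Polynomial k ⧸ Ideal.span {(X : Polynomial k) ^ m}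

instance (m : ℕ) : CommRing (km k m) := Ideal.Quotient.commRing _
instance (m : ℕ) : Algebra k (km k m) := Ideal.Quotient.algebra k

/-- The class of `ε` in `k_m`. -/
def epsm (m : ℕ) : km k m := Ideal.Quotient.mk _ X

lemma epsm_pow_self (m : ℕ) : epsm k m ^ m = 0 :=
  show (Ideal.Quotient.mk (Ideal.span {(X : Polynomial k) ^ m}) X) ^ m = 0 by
    rw [← map_pow]
    exact Ideal.Quotient.eq_zero_iff_mem.mpr (Ideal.subset_span rfl)

/-- The reduction map `k_m → k`, `ε ↦ 0`. -/
def red (m : ℕ) (hm : 0 < m) : km k m →+* k :=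
  Ideal.Quotient.lift _ (evalRingHom (0 : k)) (by
    intro p hp
    rw [Ideal.mem_span_singleton] at hp
    obtain ⟨q, rfl⟩ := hp
    simp [zero_pow hm.ne'])

variable {k}

lemma red_algebraMap (m : ℕ) (hm : 0 < m) (a : k) :
    red k m hm (algebraMap k (km k m) a) = a := by
  show red k m hm (Ideal.Quotient.mk _ (C a)) = a
  exact (Ideal.Quotient.lift_mk _ _ _).trans (by simp)

lemma exists_of_red_eq_zero {m : ℕ} {hm : 0 < m} {y : km k m} (h : red k m hm y = 0) :
    ∃ t, y = epsm k m * t := by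
  obtain ⟨p, rfl⟩ := Ideal.Quotient.mk_surjective y
  have h0 : p.coeff 0 = 0 := by
    have h' : eval 0 p = 0 := (Ideal.Quotient.lift_mk _ _ _).symm.trans h
    simpa [coeff_zero_eq_eval_zero] using h'
  obtain ⟨q, rfl⟩ := (X_dvd_iff).mpr h0
  exact ⟨Ideal.Quotient.mk _ q, (map_mul _ _ _)⟩

lemma epsm_pow_pred_mul {m : ℕ} {hm : 0 < m} {y : km k m} (h : red k m hm y = 0) :
    epsm k m ^ (m - 1) * y = 0 := by
  obtain ⟨t, rfl⟩ := exists_of_red_eq_zero h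
  calc epsm k m ^ (m-1) * (epsm k m * t) = epsm k m ^ (m - 1 + 1) * t := by ring
  _ = 0 := by rw [Nat.sub_add_cancel hm, epsm_pow_self, zero_mul]

lemma nilpotent_of_red_eq_zero {m : ℕ} {hm : 0 < m} {y : km k m} (h : red k m hm y = 0) :
    IsNilpotent y := by
  obtain ⟨t, rfl⟩ := exists_of_red_eq_zero h
  exact ⟨m, by rw [mul_pow, epsm_pow_self, zero_mul]⟩

lemma eq_zero_of_epsm_pow_pred_mul {m : ℕ} (hm : 0 < m) {a : k}
    (h : epsm k m ^ (m - 1) * algebraMap k (km k m) a = 0) : a = 0 := by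
  by_contra ha
  have : ((X : Polynomial k) ^ (m-1) * C a) ∈ Ideal.span {(X : Polynomial k) ^ m} := by
    rw [← Ideal.Quotient.eq_zero_iff_mem, map_mul, map_pow]
    exact h
  rw [Ideal.mem_span_singleton] at this
  obtain ⟨q, hq⟩ := this
  have hq0 : q ≠ 0 := by
    rintro rfl
    simp only [mul_zero] at hq
    exact (mul_ne_zero (pow_ne_zero _ X_ne_zero) (C_ne_zero.mpr ha)) hq
  have := congrArg natDegree hq
  rw [natDegree_mul (pow_ne_zero _ X_ne_zero) (C_ne_zero.mpr ha),
    natDegree_mul (pow_ne_zero _ X_ne_zero) hq0, natDegree_X_pow, natDegree_X_pow,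
    natDegree_C] at this
  omega

lemma isUnit_of_red_ne_zero {m : ℕ} {hm : 0 < m} {y : km k m} (h : red k m hm y ≠ 0) :
    IsUnit y := by
  have hn : IsNilpotent (y - algebraMap k (km k m) (red k m hm y)) :=
    nilpotent_of_red_eq_zero (hm := hm) (by simp [map_sub, red_algebraMap])
  have hu : IsUnit (algebraMap k (km k m) (red k m hm y)) :=
    (isUnit_iff_ne_zero.mpr h).map _
  have := hn.isUnit_add_right_of_commute hu (Commute.all _ _)
  simpa using this

variable (k)

/-- Every free rank-`r'` submodule `N ⊆ k_m^r` over algebraically closed `k` is of the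
form `u · (V ⊗_k k_m)` for some `u ∈ GL_r(k_m)` with `u ≡ Id (mod ε)` and some
`k`-subspace `V ⊆ k^r`. -/
theorem free_submodule_eq_unipotent_smul_subspace
    [IsAlgClosed k] (m r r' : ℕ) (hm : 0 < m) (hr' : 1 ≤ r') (hr : r' ≤ r)
    (N : Submodule (km k m) (Fin r → km k m))
    (hN : Nonempty (N ≃ₗ[km k m] (Fin r' → km k m))) :
    ∃ u : Matrix (Fin r) (Fin r) (km k m), IsUnit u ∧ u.map (red k m hm) = 1 ∧
      ∃ V : Submodule k (Fin r → k),
        N = Submodule.map u.mulVecLin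
          (Submodule.span (km k m)
            ((fun (v : Fin r → k) (i : Fin r) => algebraMap k (km k m) (v i)) ''
              (V : Set (Fin r → k)))) := by
  classical
  obtain ⟨E⟩ := hN
  set R := km k m with hR
  let b : Module.Basis (Fin r') R N := Module.Basis.ofEquivFun E
  set e : Fin r' → (Fin r → R) := fun i => (b i : Fin r → R) with he
  set w : Fin r' → (Fin r → k) := fun i j => red k m hm (e i j) with hw
  -- Step A: the reductions are linearly independent over k
  have hli : LinearIndependent k w := by
    rw [Fintype.linearIndependent_iff]
    intro a ha
    set x : N := ∑ i, algebraMap k R (a i) • b i with hx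
    have hxc : ∀ j, red k m hm ((x : Fin r → R) j) = 0 := by
      intro j
      have hcoe : (x : Fin r → R) j = ∑ i, algebraMap k R (a i) * e i j := by
        simp [hx, he, Finset.sum_apply, Algebra.smul_def]
        rfl
      rw [hcoe, map_sum]
      have : ∀ i, red k m hm (algebraMap k R (a i) * e i j) = a i * w i j := by
        intro i; rw [map_mul, red_algebraMap]
      rw [Finset.sum_congr rfl fun i _ => this i]
      have := congrFun ha j
      simpa [Finset.sum_apply] using this
    have hx0 : (epsm k m ^ (m - 1)) • x = 0 := by
      apply Subtype.ext
      funext j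
      have : ((epsm k m ^ (m - 1) • x : N) : Fin r → R) j
          = epsm k m ^ (m - 1) * (x : Fin r → R) j := rfl
      rw [this]
      exact (epsm_pow_pred_mul (hxc j)).trans rfl
    have hsum : ∑ i, (epsm k m ^ (m - 1) * algebraMap k R (a i)) • b i = 0 := by
      rw [← hx0, hx, Finset.smul_sum]
      exact Finset.sum_congr rfl fun i _ => (smul_smul _ _ _).symm
    intro i
    exact eq_zero_of_epsm_pow_pred_mul hm
      (Fintype.linearIndependent_iff.mp b.linearIndependent _ hsum i)
  -- Step B: left inverse matrix over k
  let M0 : Matrix (Fin r) (Fin r') k := Matrix.of fun j i => w i j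
  have hinj : LinearMap.ker M0.mulVecLin = ⊥ := by
    rw [LinearMap.ker_eq_bot']
    intro c hc
    funext i
    refine Fintype.linearIndependent_iff.mp hli c ?_ i
    funext j
    have := congrFun hc j
    simpa [M0, Matrix.mulVecLin_apply, Matrix.mulVec, dotProduct,
      Finset.sum_apply, mul_comm] using this
  obtain ⟨g, hg⟩ := LinearMap.exists_leftInverse_of_injective M0.mulVecLin hinj
  set P : Matrix (Fin r') (Fin r) k := LinearMap.toMatrix' g with hP
  have hPM : P * M0 = 1 := by
    apply Matrix.toLin'.injective
    rw [Matrix.toLin'_mul, Matrix.toLin'_one, hP, Matrix.toLin'_toMatrix']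
    exact hg
  -- Step C: the unipotent matrix u
  set amap : k →+* R := (algebraMap k R) with hamap
  set A : Matrix (Fin r) (Fin r') R := Matrix.of fun j i => e i j with hA
  set M0R : Matrix (Fin r) (Fin r') R := M0.map amap with hM0R
  set PR : Matrix (Fin r') (Fin r) R := P.map amap with hPR
  set u : Matrix (Fin r) (Fin r) R := 1 + (A - M0R) * PR with hu
  have hredA : (A - M0R).map (red k m hm) = 0 := by
    ext j i
    show red k m hm (e i j - algebraMap k (km k m) (w i j)) = 0
    rw [map_sub, red_algebraMap]
    exact sub_self _
  have hmapred : u.map (red k m hm) = 1 := by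
    erw [hu, Matrix.map_add (red k m hm) (map_add _), Matrix.map_mul, hredA,
      Matrix.map_one _ (map_zero _) (map_one _), Matrix.zero_mul, add_zero]
  have hunit : IsUnit u := by
    rw [Matrix.isUnit_iff_isUnit_det]
    apply isUnit_of_red_ne_zero (hm := hm)
    rw [(red k m hm).map_det, RingHom.mapMatrix_apply, hmapred, Matrix.det_one]
    exact one_ne_zero
  -- Step D: u maps the lifts of w to e
  set ιw : Fin r' → (Fin r → R) := fun i j => amap (w i j) with hιw
  have hPRM0R : PR * M0R = 1 := by
    erw [hPR, hM0R, ← Matrix.map_mul, hPM, Matrix.map_one _ (map_zero _) (map_one _)]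
  have hkey : ∀ i, u.mulVec (ιw i) = e i := by
    intro i
    have h1 : ιw i = M0R.mulVec (Pi.single i 1) := by
      funext j
      rw [Matrix.mulVec_single]
      simp [hM0R, hιw, Matrix.map_apply, M0]
    erw [hu, Matrix.add_mulVec, Matrix.one_mulVec, h1, Matrix.mulVec_mulVec,
      Matrix.mul_assoc, hPRM0R, Matrix.mul_one, Matrix.mulVec_single]
    funext j
    simp [hA, hM0R, Matrix.sub_apply, Matrix.map_apply, M0]
  -- Step E: conclusion
  refine ⟨u, hunit, hmapred, Submodule.span k (Set.range w), ?_⟩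
  have hNspan : N = Submodule.span R (Set.range e) := by
    have : Set.range e = N.subtype '' Set.range b := by
      rw [← Set.range_comp]; rfl
    rw [this, ← Submodule.map_span, b.span_eq, Submodule.map_subtype_top]
  have hspanV : Submodule.span R
      ((fun (v : Fin r → k) (i : Fin r) => algebraMap k R (v i)) ''
        ((Submodule.span k (Set.range w) : Submodule k (Fin r → k)) : Set (Fin r → k)))
      = Submodule.span R (Set.range ιw) := by
    apply le_antisymm
    · rw [Submodule.span_le]
      rintro y ⟨v, hv, rfl⟩
      induction hv using Submodule.span_induction with
      | mem z hz =>
        obtain ⟨i, rfl⟩ := hz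
        exact Submodule.subset_span ⟨i, rfl⟩
      | zero =>
        have h0 : (fun (v : Fin r → k) (i : Fin r) => algebraMap k R (v i)) 0 = 0 := by
          funext i; simp
        rw [h0]; exact Submodule.zero_mem _
      | add z₁ z₂ _ _ h1 h2 =>
        have h0 : (fun (v : Fin r → k) (i : Fin r) => algebraMap k R (v i)) (z₁ + z₂)
            = (fun (v : Fin r → k) (i : Fin r) => algebraMap k R (v i)) z₁
              + (fun (v : Fin r → k) (i : Fin r) => algebraMap k R (v i)) z₂ := by
          funext i; simp
        rw [h0]; exact Submodule.add_mem _ h1 h2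
      | smul c z _ h1 =>
        have h0 : (fun (v : Fin r → k) (i : Fin r) => algebraMap k R (v i)) (c • z)
            = algebraMap k R c • (fun (v : Fin r → k) (i : Fin r) => algebraMap k R (v i)) z := by
          funext i; simp [Algebra.smul_def]
        rw [h0]; exact Submodule.smul_mem _ _ h1
    · rw [Submodule.span_le]
      rintro y ⟨i, rfl⟩
      exact Submodule.subset_span ⟨w i, Submodule.subset_span ⟨i, rfl⟩, rfl⟩
  rw [hspanV, Submodule.map_span, ← Set.range_comp]
  rw [show ((⇑u.mulVecLin ∘ ιw) : Fin r' → Fin r → R) = e from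
    funext fun i => (Matrix.mulVecLin_apply _ _).trans (hkey i)]
  exact hNspan
end
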